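/- arXiv:2107.00780 — 2 statements merged into one kernel-verified Lean document; each statement's English description precedes it below -/
import Mathlib

section
/- The bilinear form κ̃ = κ|_{g_0} + (1/2)(κ°_g|_{g_0} − κ°_{g_0}) on g_0 ≅ gl_n^{⊕l} ⊂ gl_N satisfies κ̃(E^{[s]}_{i,j}, E^{[t]}_{p,q}) = δ_{st}( δ_{iq}δ_{jp}(k + (l−1)n) + δ_{ij}δ_{pq} ). -/
open Matrix

attribute [local instance 100] LieRing.ofAssociativeRing

/-- The index embedding (s, i) ↦ (s−1)n + i (0-indexed: s·n + i). -/
def emb {l n : ℕ} (s : Fin l) (i : Fin n) : Fin (l * n) :=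
  ⟨s.val * n + i.val, by
    have h1 : s.val + 1 ≤ l := s.2
    have h2 : i.val < n := i.2
    calc s.val * n + i.val < s.val * n + n := by omega
      _ = (s.val + 1) * n := by ring
      _ ≤ l * n := Nat.mul_le_mul_right n h1⟩

/-- The block-diagonal embedding of gl_n^{⊕l} into gl_{ln}, identifying the degree-zero
component g₀, with Pi.single s (E_{i,j}) ↦ E^{[s]}_{i,j} = E_{(s-1)n+i,(s-1)n+j}. -/
noncomputable def blockDiag (l n : ℕ) (X : Fin l → Matrix (Fin n) (Fin n) ℂ) :
    Matrix (Fin (l * n)) (Fin (l * n)) ℂ :=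
  ∑ s : Fin l, ∑ i : Fin n, ∑ j : Fin n, X s i j • Matrix.single (emb s i) (emb s j) 1

/-- The bilinear form κ on gl_N : κ(X,Y) = k·tr(XY) + tr(X)·tr(Y), which is the form
with κ(E_{i,j},E_{p,q}) = δ_{iq}δ_{jp}k + δ_{ij}δ_{pq}. -/
noncomputable def kappaForm (N : ℕ) (k : ℂ) (X Y : Matrix (Fin N) (Fin N) ℂ) : ℂ :=
  k * (X * Y).trace + X.trace * Y.trace

lemma stdBasis_repr' (m : ℕ) (M : Matrix (Fin m) (Fin m) ℂ) (p : Fin m × Fin m) :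
    (Matrix.stdBasis ℂ (Fin m) (Fin m)).repr M p = M p.1 p.2 := by
  simp [Matrix.stdBasis, Pi.basis_repr]

lemma killing_gl (m : ℕ) (X Y : Matrix (Fin m) (Fin m) ℂ) :
    killingForm ℂ (Matrix (Fin m) (Fin m) ℂ) X Y
      = 2 * m * (X * Y).trace - 2 * X.trace * Y.trace := by
  rw [killingForm_apply_apply,
    LinearMap.trace_eq_matrix_trace ℂ (Matrix.stdBasis ℂ (Fin m) (Fin m))]
  rw [Matrix.trace]
  have key : ∀ p : Fin m × Fin m,
      (LinearMap.toMatrix (Matrix.stdBasis ℂ (Fin m) (Fin m)) (Matrix.stdBasis ℂ (Fin m) (Fin m))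
        (LieAlgebra.ad ℂ _ X ∘ₗ LieAlgebra.ad ℂ _ Y)).diag p
      = (X * Y) p.1 p.1 + (Y * X) p.2 p.2 - X p.1 p.1 * Y p.2 p.2 - Y p.1 p.1 * X p.2 p.2 := by
    rintro ⟨a, b⟩
    rw [Matrix.diag_apply, LinearMap.toMatrix_apply, stdBasis_repr',
      Matrix.stdBasis_eq_single]
    simp only [LinearMap.comp_apply, LieAlgebra.ad_apply, Ring.lie_def]
    simp only [Matrix.sub_mul, Matrix.mul_sub, Matrix.sub_apply, ← Matrix.mul_assoc]
    have h1 : (X * Y * Matrix.single a b (1:ℂ)) a b = (X * Y) a a := by simp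
    have h2 : (X * Matrix.single a b (1:ℂ) * Y) a b = X a a * Y b b := by
      rw [Matrix.mul_apply]
      simp [Matrix.mul_apply, Matrix.single, ite_and, Finset.sum_ite_eq, Finset.sum_ite_eq']
    have h3 : (Y * Matrix.single a b (1:ℂ) * X) a b = Y a a * X b b := by
      rw [Matrix.mul_apply]
      simp [Matrix.mul_apply, Matrix.single, ite_and, Finset.sum_ite_eq, Finset.sum_ite_eq']
    have h4 : (Matrix.single a b (1:ℂ) * Y * X) a b = (Y * X) b b := by
      rw [Matrix.mul_assoc, Matrix.single_mul_apply_same, one_mul]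
    rw [h1, h2, h3, h4]; ring
  rw [Finset.sum_congr rfl (fun p _ => key p), Fintype.sum_prod_type]
  simp only [Finset.sum_sub_distrib, Finset.sum_add_distrib, Finset.sum_const,
    Finset.card_univ, Fintype.card_fin, nsmul_eq_mul, ← Finset.sum_mul, ← Finset.mul_sum]
  have ht : ∀ Z : Matrix (Fin m) (Fin m) ℂ, ∑ a : Fin m, Z a a = Z.trace := fun _ => rfl
  rw [ht, ht, ht, ht, Matrix.trace_mul_comm Y X]
  ring

lemma killing_pi {l n : ℕ} (s t : Fin l) (X Y : Matrix (Fin n) (Fin n) ℂ) :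
    killingForm ℂ (Fin l → Matrix (Fin n) (Fin n) ℂ) (Pi.single s X) (Pi.single t Y) =
      if s = t then killingForm ℂ (Matrix (Fin n) (Fin n) ℂ) X Y else 0 := by
  rw [killingForm_apply_apply]
  by_cases hst : s = t
  · subst hst
    rw [if_pos rfl, killingForm_apply_apply]
    have hcomp : (LieAlgebra.ad ℂ (Fin l → Matrix (Fin n) (Fin n) ℂ) (Pi.single s X) ∘ₗ
          LieAlgebra.ad ℂ (Fin l → Matrix (Fin n) (Fin n) ℂ) (Pi.single s Y))
        = (LinearMap.single ℂ (fun _ : Fin l => Matrix (Fin n) (Fin n) ℂ) s) ∘ₗ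
          ((LieAlgebra.ad ℂ (Matrix (Fin n) (Fin n) ℂ) X ∘ₗ
            LieAlgebra.ad ℂ (Matrix (Fin n) (Fin n) ℂ) Y) ∘ₗ
              LinearMap.proj s) := by
      apply LinearMap.ext; intro v
      funext w
      simp only [LinearMap.comp_apply, LieAlgebra.ad_apply, LieRing.lie_apply,
        LinearMap.proj_apply, LinearMap.single_apply]
      by_cases hw : w = s
      · subst hw; simp [Pi.single_eq_same]
      · simp [Pi.single_eq_of_ne hw, Pi.single_eq_of_ne hw]
    rw [hcomp, LinearMap.trace_comp_comm']
    congr 1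
    apply LinearMap.ext; intro v
    simp [LinearMap.comp_apply]
  · rw [if_neg hst]
    have hz : (LieAlgebra.ad ℂ (Fin l → Matrix (Fin n) (Fin n) ℂ) (Pi.single s X) ∘ₗ
        LieAlgebra.ad ℂ (Fin l → Matrix (Fin n) (Fin n) ℂ) (Pi.single t Y)) = 0 := by
      apply LinearMap.ext; intro v
      funext w
      simp only [LinearMap.comp_apply, LieAlgebra.ad_apply, LieRing.lie_apply,
        LinearMap.zero_apply, Pi.zero_apply]
      by_cases hw : w = s
      · subst hw
        rw [Pi.single_eq_of_ne hst]
        simp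
      · rw [Pi.single_eq_of_ne hw]
        simp
    rw [hz]
    simp

lemma emb_eq_iff {l n : ℕ} (s t : Fin l) (i p : Fin n) :
    emb s i = emb t p ↔ s = t ∧ i = p := by
  constructor
  · intro h
    have h' : s.val * n + i.val = t.val * n + p.val := congrArg Fin.val h
    have hi : i.val < n := i.2
    have hp : p.val < n := p.2
    have hst : s.val = t.val := by
      rcases Nat.lt_trichotomy s.val t.val with h1 | h1 | h1
      · exfalso; have : s.val * n + n ≤ t.val * n := by
          calc s.val * n + n = (s.val + 1) * n := by ring
            _ ≤ t.val * n := Nat.mul_le_mul_right n h1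
        omega
      · exact h1
      · exfalso; have : t.val * n + n ≤ s.val * n := by
          calc t.val * n + n = (t.val + 1) * n := by ring
            _ ≤ s.val * n := Nat.mul_le_mul_right n h1
        omega
    have hmul : s.val * n = t.val * n := by rw [hst]
    refine ⟨Fin.ext hst, Fin.ext ?_⟩
    omega
  · rintro ⟨rfl, rfl⟩; rfl

lemma blockDiag_single {l n : ℕ} (s : Fin l) (i j : Fin n) :
    blockDiag l n (Pi.single s (Matrix.single i j 1)) =
      Matrix.single (emb s i) (emb s j) 1 := by
  rw [_root_.blockDiag]
  rw [Finset.sum_eq_single s]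
  · rw [Pi.single_eq_same]
    rw [Finset.sum_eq_single i]
    · rw [Finset.sum_eq_single j]
      · simp
      · intro b _ hb; rw [single_apply_of_col_ne i i (Ne.symm hb), zero_smul]
      · simp
    · intro a _ ha
      apply Finset.sum_eq_zero; intro b _
      rw [single_apply_of_row_ne (Ne.symm ha), zero_smul]
    · simp
  · intro u _ hu
    rw [Pi.single_eq_of_ne hu]
    simp
  · simp

lemma trace_std_mul (m : ℕ) (a b c d : Fin m) :
    (Matrix.single a b (1:ℂ) * Matrix.single c d (1:ℂ)).trace
      = if b = c ∧ a = d then 1 else 0 := by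
  by_cases hbc : b = c
  · subst hbc
    rw [single_mul_single_same, one_mul]
    by_cases had : a = d
    · subst had; simp
    · rw [trace_single_eq_of_ne (h := had)]
      simp [had]
  · rw [single_mul_single_of_ne (h := hbc), Matrix.trace_zero]
    simp [hbc]

lemma trace_std (m : ℕ) (a b : Fin m) :
    (Matrix.single a b (1:ℂ)).trace = if a = b then 1 else 0 := by
  by_cases hab : a = b
  · subst hab; simp
  · rw [trace_single_eq_of_ne (h := hab)]
    simp [hab]

/-- The form κ̃ = κ|_{g₀} + (1/2)(κ°_g|_{g₀} − κ°_{g₀}) on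
g₀ ≅ gl_n^{⊕l} ⊂ gl_{ln} satisfies
κ̃(E^{[s]}_{i,j}, E^{[t]}_{p,q}) = δ_{st}( δ_{iq}δ_{jp}(k + (l−1)n) + δ_{ij}δ_{pq} ),
where κ°_g, κ°_{g₀} are the Killing forms of gl_{ln} and of g₀ ≅ gl_n^{⊕l}. -/
theorem stmt4 (l n : ℕ) (hl : 1 ≤ l) (hn : 1 ≤ n) (k : ℂ) :
    ∀ (s t : Fin l) (i j p q : Fin n),
      kappaForm (l * n) k
          (blockDiag l n (Pi.single s (Matrix.single i j 1)))
          (blockDiag l n (Pi.single t (Matrix.single p q 1)))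
        + (1 / 2) *
          (killingForm ℂ (Matrix (Fin (l * n)) (Fin (l * n)) ℂ)
              (blockDiag l n (Pi.single s (Matrix.single i j 1)))
              (blockDiag l n (Pi.single t (Matrix.single p q 1)))
            - killingForm ℂ (Fin l → Matrix (Fin n) (Fin n) ℂ)
                (Pi.single s (Matrix.single i j 1))
                (Pi.single t (Matrix.single p q 1))) =
      if s = t then
        (if i = q then 1 else 0) * (if j = p then 1 else 0) * (k + ((l : ℂ) - 1) * n) +
          (if i = j then (1 : ℂ) else 0) * (if p = q then 1 else 0)
      else 0 := by
  intro s t i j p q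
  rw [blockDiag_single, blockDiag_single, kappaForm, killing_pi, killing_gl, killing_gl,
    trace_std_mul, trace_std_mul, trace_std, trace_std, trace_std, trace_std]
  simp only [emb_eq_iff]
  have hln : ((l * n : ℕ) : ℂ) = (l : ℂ) * n := by push_cast; ring
  rw [hln]
  by_cases hst : s = t <;> by_cases hiq : i = q <;> by_cases hjp : j = p <;>
    by_cases hij : i = j <;> by_cases hpq : p = q <;>
      simp only [hst, hiq, hjp, hij, hpq, if_true, if_false, and_true, true_and, and_self,
        eq_self_iff_true, if_pos, and_false, false_and] <;>
    simp_all <;> ring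
end

section
/- For i < j, with A_i = Σ_{m≥0}Σ_{a=1}^{i−1} W_{i,a}(−m)W_{a,i}(m) and A_j defined analogously, one has [A_i, A_j] = Σ_{m,m'≥0, m−m'>0} Σ_{a=1}^{i−1} ( W_{j,a}(−m')W_{i,j}(−m+m')W_{a,i}(m) − W_{i,a}(−m)W_{j,i}(m−m')W_{a,j}(m') ), where W_{i,j}(m) abbreviates W^{(1)}_{i,j}(m). -/
open Finset

section Aux

variable {A : Type*} [Ring A]

private lemma lie_expand (x y z w : A) :
    ⁅x*y, z*w⁆ = x*z*⁅y,w⁆ + x*⁅y,z⁆*w + z*⁅x,w⁆*y + ⁅x,z⁆*w*y := by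
  simp only [Ring.lie_def]; noncomm_ring

private lemma lie_mul_right' (x y z : A) : ⁅x, y*z⁆ = ⁅x,y⁆*z + y*⁅x,z⁆ := by
  simp only [Ring.lie_def]; noncomm_ring

private lemma fsum_lie {ι : Type*} (s : Finset ι) (f : ι → A) (y : A) :
    ⁅∑ x ∈ s, f x, y⁆ = ∑ x ∈ s, ⁅f x, y⁆ := by
  simp only [Ring.lie_def, Finset.sum_mul, Finset.mul_sum]
  exact (Finset.sum_sub_distrib _ _).symm

private lemma lie_fsum {ι : Type*} (s : Finset ι) (f : ι → A) (y : A) :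
    ⁅y, ∑ x ∈ s, f x⁆ = ∑ x ∈ s, ⁅y, f x⁆ := by
  simp only [Ring.lie_def, Finset.sum_mul, Finset.mul_sum]
  exact (Finset.sum_sub_distrib _ _).symm

variable [TopologicalSpace A] [IsTopologicalRing A]

private noncomputable def lieLhom (x : A) : A →+ A :=
  AddMonoidHom.mulLeft x - AddMonoidHom.mulRight x

private lemma lieLhom_apply (x y : A) : lieLhom x y = ⁅x, y⁆ := by
  simp [lieLhom, Ring.lie_def]

private lemma lieLhom_cont (x : A) : Continuous (lieLhom x) := by
  have h : ⇑(lieLhom x) = fun y => x * y - y * x := by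
    funext y; simp [lieLhom]
  rw [h]
  exact (continuous_mul_left x).sub (continuous_mul_right x)

private noncomputable def lieRhom (y : A) : A →+ A :=
  AddMonoidHom.mulRight y - AddMonoidHom.mulLeft y

private lemma lieRhom_apply (x y : A) : lieRhom y x = ⁅x, y⁆ := by
  simp [lieRhom, Ring.lie_def]

private lemma lieRhom_cont (y : A) : Continuous (lieRhom y) := by
  have h : ⇑(lieRhom y) = fun x => x * y - y * x := by
    funext x; simp [lieRhom]
  rw [h]
  exact (continuous_mul_right y).sub (continuous_mul_left y)

private lemma summable_lieL {f : ℕ → A} (x : A) (hf : Summable f) :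
    Summable fun m => ⁅x, f m⁆ := by
  have h := hf.map (lieLhom x) (lieLhom_cont x)
  exact h.congr fun m => by simp [Function.comp, lieLhom_apply]

private lemma summable_lieR {f : ℕ → A} (y : A) (hf : Summable f) :
    Summable fun m => ⁅f m, y⁆ := by
  have h := hf.map (lieRhom y) (lieRhom_cont y)
  exact h.congr fun m => by simp [Function.comp, lieRhom_apply]

variable [T2Space A]

private lemma lie_tsum' {f : ℕ → A} (x : A) (hf : Summable f) :
    ⁅x, ∑' m, f m⁆ = ∑' m, ⁅x, f m⁆ := by
  have h := (hf.hasSum.map (lieLhom x) (lieLhom_cont x)).tsum_eq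
  rw [← lieLhom_apply, ← h]
  exact tsum_congr fun m => by simp [Function.comp, lieLhom_apply]

private lemma tsum_lie' {f : ℕ → A} (y : A) (hf : Summable f) :
    ⁅∑' m, f m, y⁆ = ∑' m, ⁅f m, y⁆ := by
  have h := (hf.hasSum.map (lieRhom y) (lieRhom_cont y)).tsum_eq
  rw [← lieRhom_apply, ← h]
  exact tsum_congr fun m => by simp [Function.comp, lieRhom_apply]

end Aux
set_option linter.unusedSectionVars false
set_option maxHeartbeats 1000000

open Finset


section Main

variable {n : ℕ} {A : Type*} [Ring A] [Algebra ℂ A]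

def WRel (l : ℕ) (α : ℂ) (W : Fin n → Fin n → ℤ → A) : Prop :=
  ∀ (i j p q : Fin n) (m m' : ℤ),
    ⁅W i j m, W p q m'⁆ =
      (if p = j then W i q (m + m') else 0) - (if i = q then W p j (m + m') else 0) +
        ((m : ℂ) * (if m + m' = 0 then 1 else 0) * (l : ℂ) *
          ((if i = q then 1 else 0) * (if j = p then 1 else 0) * α +
            (if i = j then 1 else 0) * (if p = q then 1 else 0))) • (1 : A)

variable {l : ℕ} {α : ℂ} {W : Fin n → Fin n → ℤ → A}

private lemma lemPa (hW : WRel l α W) {i j a : Fin n}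
    (hai : (a:ℕ) < (i:ℕ)) (hij : (i:ℕ) < (j:ℕ)) (m m' : ℤ) :
    ⁅W i a (-m) * W a i m, W j a (-m') * W a j m'⁆
      = W j a (-m') * W i j (-m + m') * W a i m
        - W i a (-m) * W j i (m + -m') * W a j m' := by
  have h1 : a ≠ i := Fin.ne_of_val_ne (by omega)
  have h2 : i ≠ a := Fin.ne_of_val_ne (by omega)
  have h3 : a ≠ j := Fin.ne_of_val_ne (by omega)
  have h4 : j ≠ a := Fin.ne_of_val_ne (by omega)
  have h5 : i ≠ j := Fin.ne_of_val_ne (by omega)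
  have h6 : j ≠ i := Fin.ne_of_val_ne (by omega)
  unfold WRel at hW
  rw [lie_expand]
  simp only [hW]
  simp [h1, h2, h3, h4, h5, h6]
  noncomm_ring

private lemma lemQa (hW : WRel l α W) {i j a : Fin n}
    (hai : (a:ℕ) < (i:ℕ)) (hij : (i:ℕ) < (j:ℕ)) (m m' : ℤ) :
    ⁅W i a (-m) * W a i m, W j i (-m') * W i j m'⁆
      = W i a (-m) * W j i (-m') * W a j (m + m')
        - W j a (-m + -m') * W i j m' * W a i m := by
  have h1 : a ≠ i := Fin.ne_of_val_ne (by omega)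
  have h2 : i ≠ a := Fin.ne_of_val_ne (by omega)
  have h3 : a ≠ j := Fin.ne_of_val_ne (by omega)
  have h4 : j ≠ a := Fin.ne_of_val_ne (by omega)
  have h5 : i ≠ j := Fin.ne_of_val_ne (by omega)
  have h6 : j ≠ i := Fin.ne_of_val_ne (by omega)
  unfold WRel at hW
  rw [lie_expand]
  simp only [hW]
  simp [h1, h2, h3, h4, h5, h6]
  noncomm_ring

private lemma lemB0 (hW : WRel l α W) {i j a b : Fin n}
    (hai : (a:ℕ) < (i:ℕ)) (hij : (i:ℕ) < (j:ℕ)) (hba : b ≠ a) (hbi : b ≠ i) (m m' : ℤ) :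
    ⁅W i a (-m) * W a i m, W j b (-m') * W b j m'⁆ = 0 := by
  have h1 : a ≠ i := Fin.ne_of_val_ne (by omega)
  have h3 : a ≠ j := Fin.ne_of_val_ne (by omega)
  have h5 : i ≠ j := Fin.ne_of_val_ne (by omega)
  have h6 : j ≠ i := Fin.ne_of_val_ne (by omega)
  have h2 : i ≠ a := Fin.ne_of_val_ne (by omega)
  have h7 : a ≠ b := hba.symm
  have h8 : i ≠ b := hbi.symm
  have h9 : j ≠ a := Fin.ne_of_val_ne (by omega)
  unfold WRel at hW
  rw [lie_expand]
  simp only [hW]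
  simp [h1, h2, h3, h5, h6, h7, h8, h9, hba, hbi]

end Main

section Main2

variable {n : ℕ} {A : Type*} [Ring A] [Algebra ℂ A] [TopologicalSpace A]
  [IsTopologicalRing A] [T2Space A]

def filt (n k : ℕ) : Finset (Fin n) := Finset.univ.filter fun c => (c : ℕ) < k

noncomputable def Pb (W : Fin n → Fin n → ℤ → A) (i j : Fin n) (m k : ℕ) : A :=
  ∑ a ∈ filt n (i : ℕ),
    (W j a (-(k:ℤ)) * W i j (-(m:ℤ) + (k:ℤ)) * W a i (m:ℤ)
      - W i a (-(m:ℤ)) * W j i ((m:ℤ) - (k:ℤ)) * W a j (k:ℤ))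

variable {l : ℕ} {α : ℂ} {W : Fin n → Fin n → ℤ → A}

private lemma bracket_FF (hW : WRel l α W) {i j : Fin n} (hij : (i:ℕ) < (j:ℕ)) (m m' : ℕ) :
    ⁅∑ a ∈ filt n (i:ℕ), W i a (-(m:ℤ)) * W a i (m:ℤ),
      ∑ b ∈ filt n (j:ℕ), W j b (-(m':ℤ)) * W b j (m':ℤ)⁆
      = Pb W i j m m'
        + ⁅∑ a ∈ filt n (i:ℕ), W i a (-(m:ℤ)) * W a i (m:ℤ),
            W j i (-(m':ℤ)) * W i j (m':ℤ)⁆ := by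
  rw [fsum_lie, fsum_lie, Pb, ← Finset.sum_add_distrib]
  refine Finset.sum_congr rfl fun a ha => ?_
  have hai : (a:ℕ) < (i:ℕ) := by simpa [filt] using ha
  rw [lie_fsum]
  have hane : a ≠ i := Fin.ne_of_val_ne (by omega)
  have hsub : ({a, i} : Finset (Fin n)) ⊆ filt n (j:ℕ) := by
    intro c hc
    simp only [Finset.mem_insert, Finset.mem_singleton] at hc
    rcases hc with rfl | rfl <;> simp [filt] <;> omega
  rw [← Finset.sum_subset hsub (fun c hcj hc => by
    simp only [Finset.mem_insert, Finset.mem_singleton, not_or] at hc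
    exact lemB0 hW hai hij hc.1 hc.2 (m:ℤ) (m':ℤ))]
  rw [Finset.sum_pair hane, lemPa hW hai hij (m:ℤ) (m':ℤ)]
  rw [show (m:ℤ) - (m':ℤ) = (m:ℤ) + -(m':ℤ) from sub_eq_add_neg _ _]

private lemma bracket_Fq (hW : WRel l α W) {i j : Fin n} (hij : (i:ℕ) < (j:ℕ)) (m m' : ℕ) :
    ⁅∑ a ∈ filt n (i:ℕ), W i a (-(m:ℤ)) * W a i (m:ℤ),
        W j i (-(m':ℤ)) * W i j (m':ℤ)⁆
      = - Pb W i j m (m + m') := by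
  rw [fsum_lie, Pb, ← Finset.sum_neg_distrib]
  refine Finset.sum_congr rfl fun a ha => ?_
  have hai : (a:ℕ) < (i:ℕ) := by simpa [filt] using ha
  rw [lemQa hW hai hij (m:ℤ) (m':ℤ)]
  rw [show ((m + m' : ℕ):ℤ) = (m:ℤ) + (m':ℤ) by push_cast; ring]
  rw [show (-((m:ℤ) + (m':ℤ))) = -(m:ℤ) + -(m':ℤ) from neg_add _ _]
  rw [show (-(m:ℤ) + ((m:ℤ) + (m':ℤ))) = (m':ℤ) by ring]
  rw [show ((m:ℤ) - ((m:ℤ) + (m':ℤ))) = -(m':ℤ) by ring]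
  rw [neg_sub]

private lemma summable_partial (hW : WRel l α W)
    (hsumA : ∀ p : Fin n, Summable fun m : ℕ =>
      ∑ c ∈ filt n (p:ℕ), W p c (-(m:ℤ)) * W c p (m:ℤ))
    {j : Fin n} (k : ℕ) (hk : k ≤ (j : ℕ)) :
    Summable fun m' : ℕ => ∑ c ∈ filt n k, W j c (-(m':ℤ)) * W c j (m':ℤ) := by
  rcases eq_or_lt_of_le hk with heq | hlt
  · rw [heq]; exact hsumA j
  · have hkn : k < n := lt_trans hlt j.isLt
    set b : Fin n := ⟨k, hkn⟩ with hbdef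
    have hbk : (b:ℕ) = k := rfl
    have key : ∀ m' : ℕ,
        (∑ c ∈ filt n k, W b c (-(m':ℤ)) * W c b (m':ℤ))
          - ⁅W b j 0, ⁅W j b 0, ∑ c ∈ filt n k, W b c (-(m':ℤ)) * W c b (m':ℤ)⁆⁆
        = ∑ c ∈ filt n k, W j c (-(m':ℤ)) * W c j (m':ℤ) := by
      intro m'
      have inner : ⁅W j b 0, ∑ c ∈ filt n k, W b c (-(m':ℤ)) * W c b (m':ℤ)⁆
          = ∑ c ∈ filt n k, W j c (-(m':ℤ)) * W c b (m':ℤ) := by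
        rw [lie_fsum]
        refine Finset.sum_congr rfl fun c hc => ?_
        have hck : (c:ℕ) < k := by simpa [filt] using hc
        have e1 : c ≠ j := Fin.ne_of_val_ne (by omega)
        have e2 : j ≠ c := Fin.ne_of_val_ne (by omega)
        have e3 : c ≠ b := Fin.ne_of_val_ne (by omega)
        have e4 : b ≠ c := Fin.ne_of_val_ne (by omega)
        have e5 : j ≠ b := Fin.ne_of_val_ne (by omega)
        have e6 : b ≠ j := Fin.ne_of_val_ne (by omega)
        unfold WRel at hW
        rw [lie_mul_right']
        simp only [hW]
        simp [e1, e2, e3, e4, e5, e6]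
      have outer : ⁅W b j 0, ∑ c ∈ filt n k, W j c (-(m':ℤ)) * W c b (m':ℤ)⁆
          = ∑ c ∈ filt n k,
              (W b c (-(m':ℤ)) * W c b (m':ℤ) - W j c (-(m':ℤ)) * W c j (m':ℤ)) := by
        rw [lie_fsum]
        refine Finset.sum_congr rfl fun c hc => ?_
        have hck : (c:ℕ) < k := by simpa [filt] using hc
        have e1 : c ≠ j := Fin.ne_of_val_ne (by omega)
        have e2 : j ≠ c := Fin.ne_of_val_ne (by omega)
        have e3 : c ≠ b := Fin.ne_of_val_ne (by omega)
        have e4 : b ≠ c := Fin.ne_of_val_ne (by omega)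
        have e5 : j ≠ b := Fin.ne_of_val_ne (by omega)
        have e6 : b ≠ j := Fin.ne_of_val_ne (by omega)
        unfold WRel at hW
        rw [lie_mul_right']
        simp only [hW]
        simp [e1, e2, e3, e4, e5, e6, sub_eq_add_neg, mul_neg]
      rw [inner, outer, Finset.sum_sub_distrib]
      abel
    have hsb : Summable fun m' : ℕ => ∑ c ∈ filt n k, W b c (-(m':ℤ)) * W c b (m':ℤ) := by
      have := hsumA b
      rwa [hbk] at this
    exact ((hsb.sub (summable_lieL _ (summable_lieL _ hsb)))).congr key

private lemma summable_q (hW : WRel l α W)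
    (hsumA : ∀ p : Fin n, Summable fun m : ℕ =>
      ∑ c ∈ filt n (p:ℕ), W p c (-(m:ℤ)) * W c p (m:ℤ))
    {i j : Fin n} (hij : (i:ℕ) < (j:ℕ)) :
    Summable fun m' : ℕ => W j i (-(m':ℤ)) * W i j (m':ℤ) := by
  have h1 := summable_partial hW hsumA (j := j) ((i:ℕ)+1) (by omega)
  have h2 := summable_partial hW hsumA (j := j) (i:ℕ) (by omega)
  have hins : filt n ((i:ℕ)+1) = insert i (filt n (i:ℕ)) := by
    ext c
    simp only [filt, Finset.mem_filter, Finset.mem_univ, true_and, Finset.mem_insert,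
      Fin.ext_iff]
    omega
  refine (h1.sub h2).congr fun m' => ?_
  rw [hins, Finset.sum_insert (by simp [filt])]
  exact add_sub_cancel_right _ _

end Main2

/-- A_i = Σ_{m≥0} Σ_{a=1}^{i−1} W_{i,a}(−m)W_{a,i}(m). -/
noncomputable def Aop {n : ℕ} {A : Type*} [Ring A] [TopologicalSpace A]
    (W : Fin n → Fin n → ℤ → A) (i : Fin n) : A :=
  ∑' m : ℕ, ∑ a : Fin n,
    if (a : ℕ) < (i : ℕ) then W i a (-(m : ℤ)) * W a i (m : ℤ) else 0

/-- For i < j,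
[A_i, A_j] = Σ_{m,m'≥0, m−m'>0} Σ_{a=1}^{i−1}
 ( W_{j,a}(−m')W_{i,j}(−m+m')W_{a,i}(m) − W_{i,a}(−m)W_{j,i}(m−m')W_{a,j}(m') ),
where W_{i,j}(m) = W^{(1)}_{i,j}(m) satisfy the affine gl_n relation at level l·α. -/
theorem stmt16 (l n : ℕ) (α : ℂ) (A : Type*) [Ring A] [Algebra ℂ A]
    [TopologicalSpace A] [IsTopologicalRing A] [T2Space A]
    (W : Fin n → Fin n → ℤ → A)
    (hW : ∀ (i j p q : Fin n) (m m' : ℤ),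
      ⁅W i j m, W p q m'⁆ =
        (if p = j then W i q (m + m') else 0) - (if i = q then W p j (m + m') else 0) +
          ((m : ℂ) * (if m + m' = 0 then 1 else 0) * (l : ℂ) *
            ((if i = q then 1 else 0) * (if j = p then 1 else 0) * α +
              (if i = j then 1 else 0) * (if p = q then 1 else 0))) • (1 : A))
    (hsumA : ∀ i : Fin n, Summable (fun m : ℕ => ∑ a : Fin n,
      if (a : ℕ) < (i : ℕ) then W i a (-(m : ℤ)) * W a i (m : ℤ) else 0)) :
    ∀ i j : Fin n, (i : ℕ) < (j : ℕ) →
      ⁅Aop W i, Aop W j⁆ =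
        ∑' m : ℕ, ∑' m' : ℕ,
          if m' < m then
            ∑ a : Fin n,
              if (a : ℕ) < (i : ℕ) then
                W j a (-(m' : ℤ)) * W i j (-(m : ℤ) + (m' : ℤ)) * W a i (m : ℤ) -
                  W i a (-(m : ℤ)) * W j i ((m : ℤ) - (m' : ℤ)) * W a j (m' : ℤ)
              else 0
          else 0 := by
  intro i j hij
  have hWrel : WRel l α W := hW
  have hFi : ∀ (p : Fin n) (m : ℕ),
      (∑ a : Fin n, if (a:ℕ) < (p:ℕ) then W p a (-(m:ℤ)) * W a p (m:ℤ) else 0)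
        = ∑ a ∈ filt n (p:ℕ), W p a (-(m:ℤ)) * W a p (m:ℤ) :=
    fun p m => (Finset.sum_filter _ _).symm
  have hsum' : ∀ p : Fin n, Summable fun m : ℕ =>
      ∑ a ∈ filt n (p:ℕ), W p a (-(m:ℤ)) * W a p (m:ℤ) :=
    fun p => (hsumA p).congr fun m => hFi p m
  have hAop : ∀ p : Fin n, Aop W p
      = ∑' m : ℕ, ∑ a ∈ filt n (p:ℕ), W p a (-(m:ℤ)) * W a p (m:ℤ) := by
    intro p; unfold Aop; exact tsum_congr fun m => hFi p m
  have hq := summable_q hWrel hsum' hij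
  rw [hAop i, hAop j, tsum_lie' _ (hsum' i)]
  refine tsum_congr fun m => ?_
  rw [lie_tsum' _ (hsum' j)]
  have hFF : Summable fun m' : ℕ =>
      ⁅∑ a ∈ filt n (i:ℕ), W i a (-(m:ℤ)) * W a i (m:ℤ),
        ∑ b ∈ filt n (j:ℕ), W j b (-(m':ℤ)) * W b j (m':ℤ)⁆ :=
    summable_lieL _ (hsum' j)
  have hFq : Summable fun m' : ℕ =>
      ⁅∑ a ∈ filt n (i:ℕ), W i a (-(m:ℤ)) * W a i (m:ℤ),
        W j i (-(m':ℤ)) * W i j (m':ℤ)⁆ :=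
    summable_lieL _ hq
  have hPsum : Summable fun m' : ℕ => Pb W i j m m' := by
    refine (hFF.sub hFq).congr fun m' => ?_
    rw [bracket_FF hWrel hij m m']
    exact add_sub_cancel_right _ _
  calc (∑' m' : ℕ, ⁅∑ a ∈ filt n (i:ℕ), W i a (-(m:ℤ)) * W a i (m:ℤ),
          ∑ b ∈ filt n (j:ℕ), W j b (-(m':ℤ)) * W b j (m':ℤ)⁆)
      = ∑' m' : ℕ, (Pb W i j m m'
          + ⁅∑ a ∈ filt n (i:ℕ), W i a (-(m:ℤ)) * W a i (m:ℤ),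
              W j i (-(m':ℤ)) * W i j (m':ℤ)⁆) :=
        tsum_congr fun m' => bracket_FF hWrel hij m m'
    _ = (∑' m' : ℕ, Pb W i j m m')
          + ∑' m' : ℕ, ⁅∑ a ∈ filt n (i:ℕ), W i a (-(m:ℤ)) * W a i (m:ℤ),
              W j i (-(m':ℤ)) * W i j (m':ℤ)⁆ := Summable.tsum_add hPsum hFq
    _ = (∑' m' : ℕ, Pb W i j m m') + ∑' m' : ℕ, -(Pb W i j m (m' + m)) := by
        congr 1
        refine tsum_congr fun m' => ?_
        rw [Nat.add_comm m' m]
        exact bracket_Fq hWrel hij m m'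
    _ = (∑' m' : ℕ, Pb W i j m m') - ∑' m' : ℕ, Pb W i j m (m' + m) := by
        rw [tsum_neg, ← sub_eq_add_neg]
    _ = ∑ k ∈ Finset.range m, Pb W i j m k :=
        (eq_sub_of_add_eq (Summable.sum_add_tsum_nat_add m hPsum)).symm
    _ = ∑' m' : ℕ, if m' < m then
            ∑ a : Fin n,
              if (a : ℕ) < (i : ℕ) then
                W j a (-(m' : ℤ)) * W i j (-(m : ℤ) + (m' : ℤ)) * W a i (m : ℤ) -
                  W i a (-(m : ℤ)) * W j i ((m : ℤ) - (m' : ℤ)) * W a j (m' : ℤ)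
              else 0
          else 0 := by
        rw [tsum_eq_sum (s := Finset.range m)
          (fun b hb => if_neg (by simpa using hb))]
        refine Finset.sum_congr rfl fun k hk => ?_
        rw [if_pos (Finset.mem_range.mp hk)]
        simp only [Pb]
        exact Finset.sum_filter _ _
end
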